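/- (In classical logic.) Let 𝒱 be a fann. Then there is a natural morphism f from natural Cantor space 𝒞 to 𝒱 that is surjective up to equivalence: for every point x of 𝒱 there is a point p of 𝒞 with f(p) ≡ x. -/

import Mathlib

/-! # Natural Topology: basic framework (Waaldijk) -/

/-- A pre-natural space: a countable set of basic dots with a decidable
pre-apartness `apart` and a decidable refinement partial order `refines`. -/
structure PreNaturalSpace (V : Type) : Type where
  countable' : Countable V
  apart : V → V → Prop
  refines : V → V → Prop
  apart_dec : DecidableRel apart
  refines_dec : DecidableRel refines
  apart_symm : ∀ a b, apart a b → apart b a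
  apart_irrefl : ∀ a, ¬ apart a a
  apart_mono : ∀ a b c, refines a b → apart c b → apart c a
  refines_refl : ∀ a, refines a a
  refines_trans : ∀ a b c, refines a b → refines b c → refines a c
  refines_antisymm : ∀ a b, refines a b → refines b a → a = b

namespace PreNaturalSpace

variable {V W : Type}

/-- `a ≺ b` : strict refinement. -/
def strict (P : PreNaturalSpace V) (a b : V) : Prop := P.refines a b ∧ a ≠ b

/-- A point is a shrinking sequence of dots deciding every apart pair of dots. -/
structure IsPoint (P : PreNaturalSpace V) (p : ℕ → V) : Prop where
  mono : ∀ n, P.refines (p (n + 1)) (p n)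
  shrink : ∀ n, ∃ m, P.strict (p m) (p n)
  decides : ∀ a b, P.apart a b → ∃ m, P.apart (p m) a ∨ P.apart (p m) b

/-- The set of points of a pre-natural space. -/
def Pt (P : PreNaturalSpace V) : Type := { p : ℕ → V // P.IsPoint p }

/-- `p` begins with the dot `a` : some `p m ≺ a`. -/
def begins (P : PreNaturalSpace V) (p : ℕ → V) (a : V) : Prop := ∃ m, P.strict (p m) a

/-- Apartness between a dot and a point. -/
def dApart (P : PreNaturalSpace V) (a : V) (p : ℕ → V) : Prop := ∃ m, P.apart (p m) a

/-- Apartness between points. -/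
def pApart (P : PreNaturalSpace V) (p q : P.Pt) : Prop := ∃ n, P.apart (p.1 n) (q.1 n)

/-- Equivalence of points: the negation of apartness. -/
def pEquiv (P : PreNaturalSpace V) (p q : P.Pt) : Prop := ¬ P.pApart p q

variable (P : PreNaturalSpace V)

lemma refines_of_le {p : ℕ → V} (hp : ∀ n, P.refines (p (n + 1)) (p n)) :
    ∀ {m k : ℕ}, m ≤ k → P.refines (p k) (p m) := by
  intro m k h
  induction h with
  | refl => exact P.refines_refl _
  | step h ih => exact P.refines_trans _ _ _ (hp _) ih

lemma begins_mono {z : ℕ → V} (hz : P.IsPoint z) {a b : V} (hab : P.refines a b)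
    (h : P.begins z a) : P.begins z b := by
  obtain ⟨j, hj1, hj2⟩ := h
  have hzb : P.refines (z j) b := P.refines_trans _ _ _ hj1 hab
  by_cases he : z j = b
  · obtain ⟨i, hi1, hi2⟩ := hz.shrink j
    exact ⟨i, P.refines_trans _ _ _ hi1 hzb, fun h' => hi2 (h'.trans he.symm)⟩
  · exact ⟨j, hzb, he⟩

/-- The natural (apartness) topology as a predicate on subsets of the point set. -/
def NatOpen (U : Set P.Pt) : Prop :=
  ∀ x ∈ U, ∀ y : P.Pt, P.pApart y x ∨ ∃ m, { z : P.Pt | P.begins z.1 (y.1 m) } ⊆ U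

instance instTopPt : TopologicalSpace P.Pt where
  IsOpen := P.NatOpen
  isOpen_univ := fun _ _ _ => Or.inr ⟨0, fun _ _ => trivial⟩
  isOpen_inter := by
    intro U U' hU hU' x hx y
    rcases hU x hx.1 y with h | ⟨m, hm⟩
    · exact Or.inl h
    rcases hU' x hx.2 y with h | ⟨k, hk⟩
    · exact Or.inl h
    refine Or.inr ⟨max m k, fun z hz => ⟨hm ?_, hk ?_⟩⟩
    · exact P.begins_mono z.2 (P.refines_of_le y.2.mono (le_max_left m k)) hz
    · exact P.begins_mono z.2 (P.refines_of_le y.2.mono (le_max_right m k)) hz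
  isOpen_sUnion := by
    intro S hS x hx y
    obtain ⟨U, hU, hxU⟩ := hx
    rcases hS U hU x hxU y with h | ⟨m, hm⟩
    · exact Or.inl h
    · exact Or.inr ⟨m, fun z hz => ⟨U, hU, hm hz⟩⟩

lemma pEquiv_refl (p : P.Pt) : P.pEquiv p p := fun ⟨_, h⟩ => P.apart_irrefl _ h

lemma pEquiv_symm {p q : P.Pt} (h : P.pEquiv p q) : P.pEquiv q p :=
  fun ⟨n, hn⟩ => h ⟨n, P.apart_symm _ _ hn⟩

lemma pEquiv_trans {p q r : P.Pt} (hpq : P.pEquiv p q) (hqr : P.pEquiv q r) :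
    P.pEquiv p r := by
  rintro ⟨n, hn⟩
  obtain ⟨m, hm⟩ := q.2.decides (p.1 n) (r.1 n) hn
  rcases hm with hm | hm
  · -- q.1 m apart from p.1 n
    refine hpq ⟨max m n, ?_⟩
    have h1 : P.apart (p.1 n) (q.1 (max m n)) :=
      P.apart_mono _ _ _ (P.refines_of_le q.2.mono (le_max_left m n)) (P.apart_symm _ _ hm)
    have h2 : P.apart (q.1 (max m n)) (p.1 (max m n)) :=
      P.apart_mono _ _ _ (P.refines_of_le p.2.mono (le_max_right m n)) (P.apart_symm _ _ h1)
    exact P.apart_symm _ _ h2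
  · refine hqr ⟨max m n, ?_⟩
    have h1 : P.apart (r.1 n) (q.1 (max m n)) :=
      P.apart_mono _ _ _ (P.refines_of_le q.2.mono (le_max_left m n)) (P.apart_symm _ _ hm)
    exact P.apart_mono _ _ _ (P.refines_of_le r.2.mono (le_max_right m n))
      (P.apart_symm _ _ h1)

/-- The setoid of points modulo `≡`. -/
def ptSetoid : Setoid P.Pt :=
  ⟨P.pEquiv, ⟨P.pEquiv_refl, P.pEquiv_symm, P.pEquiv_trans⟩⟩

/-- `â` : the set of points beginning with the dot `a`. -/
def hatSet (a : V) : Set P.Pt := { p | P.begins p.1 a }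

/-- `ā` : the `≡`-closure of `â`. -/
def barSet (a : V) : Set P.Pt := { p | ∃ q : P.Pt, P.begins q.1 a ∧ P.pEquiv p q }

/-- A natural space is basic-open when every `ā` is open. -/
def BasicOpen : Prop := ∀ a : V, IsOpen (P.barSet a)

/-- Existence of a maximal dot. -/
def HasMaxDot : Prop := ∃ m, ∀ a, P.refines a m

/-- Every basic dot begins at least one point. -/
def AllDotsInhabited : Prop := ∀ a : V, ∃ p : ℕ → V, P.IsPoint p ∧ P.begins p a

/-- The conditions making the point set of a pre-natural space a natural space. -/
def IsNaturalSpace : Prop := P.HasMaxDot ∧ P.AllDotsInhabited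

end PreNaturalSpace

/-- A refinement morphism between (pre-)natural spaces: a map on dots sending
points to points and reflecting apartness of points. -/
structure RefMorphism {V W : Type} (P : PreNaturalSpace V) (Q : PreNaturalSpace W) : Type where
  toFun : V → W
  maps_points : ∀ p : ℕ → V, P.IsPoint p → Q.IsPoint (fun n => toFun (p n))
  reflects_apart : ∀ p q : ℕ → V, P.IsPoint p → P.IsPoint q →
    (∃ n, Q.apart (toFun (p n)) (toFun (q n))) → ∃ n, P.apart (p n) (q n)

/-- The induced map on points of a refinement morphism. -/
def RefMorphism.pointMap {V W : Type} {P : PreNaturalSpace V} {Q : PreNaturalSpace W}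
    (f : RefMorphism P Q) (p : P.Pt) : Q.Pt :=
  ⟨fun n => f.toFun (p.1 n), f.maps_points p.1 p.2⟩

namespace PreNaturalSpace

variable {V W : Type} (P : PreNaturalSpace V)

/-- Restriction of a pre-natural space to a subset of dots. -/
noncomputable def restrict (S : Set V) : PreNaturalSpace S where
  countable' := by haveI := P.countable'; exact inferInstance
  apart a b := P.apart a.1 b.1
  refines a b := P.refines a.1 b.1
  apart_dec := Classical.decRel _
  refines_dec := Classical.decRel _
  apart_symm _ _ h := P.apart_symm _ _ h
  apart_irrefl a := P.apart_irrefl a.1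
  apart_mono _ _ _ h1 h2 := P.apart_mono _ _ _ h1 h2
  refines_refl a := P.refines_refl a.1
  refines_trans _ _ _ h1 h2 := P.refines_trans _ _ _ h1 h2
  refines_antisymm _ _ h1 h2 := Subtype.ext (P.refines_antisymm _ _ h1 h2)

/-! ## Trail spaces -/

/-- A `≺`-trail: a finite strictly refining sequence `a₀ ≻ a₁ ≻ …`. -/
def Trail : Type := { l : List V // l.Chain' fun a b => P.strict b a }

lemma strict_trans_flip : Transitive (fun a b : V => P.strict b a) := by
  rintro a b c ⟨h1, h1'⟩ ⟨h2, h2'⟩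
  refine ⟨P.refines_trans _ _ _ h2 h1, fun he => ?_⟩
  exact h2' (P.refines_antisymm _ _ h2 (he ▸ h1))

lemma last_refines_of_prefix {a b : List V}
    (ha : a.Chain' fun x y => P.strict y x) (hpre : b <+: a)
    {x y : V} (hx : x ∈ a.getLast?) (hy : y ∈ b.getLast?) :
    P.refines x y := by
  haveI : IsTrans V (fun x y : V => P.strict y x) := ⟨fun _ _ _ h1 h2 => P.strict_trans_flip h1 h2⟩
  have hpw : a.Pairwise fun x y => P.strict y x := List.isChain_iff_pairwise.mp ha
  obtain ⟨t, rfl⟩ := hpre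
  rcases eq_or_ne t [] with rfl | ht
  · rw [List.append_nil] at hx
    have : x = y := by
      rw [Option.mem_def] at hx hy
      exact Option.some_injective _ (hx ▸ hy ▸ rfl)
    exact this ▸ P.refines_refl x
  · rw [List.getLast?_append_of_ne_nil _ ht] at hx
    have hxt : x ∈ t := List.mem_of_mem_getLast? hx
    have hyb : y ∈ b := List.mem_of_mem_getLast? hy
    have := (List.pairwise_append.mp hpw).2.2 y hyb x hxt
    exact this.1

/-- The trail space of a pre-natural space: dots are `≺`-trails, with
`a ⊑* b` iff `b` is an initial segment of `a`, and `a #* b` iff the last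
dots of `a` and `b` are apart. -/
noncomputable def trailSpace : PreNaturalSpace P.Trail where
  countable' := by haveI := P.countable'; exact inferInstanceAs (Countable
    { l : List V // l.Chain' fun a b => P.strict b a })
  apart a b := ∃ x ∈ a.1.getLast?, ∃ y ∈ b.1.getLast?, P.apart x y
  refines a b := b.1 <+: a.1
  apart_dec := Classical.decRel _
  refines_dec := Classical.decRel _
  apart_symm := by
    rintro a b ⟨x, hx, y, hy, hxy⟩
    exact ⟨y, hy, x, hx, P.apart_symm _ _ hxy⟩
  apart_irrefl := by
    rintro a ⟨x, hx, y, hy, hxy⟩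
    rw [Option.mem_def] at hx hy
    have : x = y := Option.some_injective _ (hx ▸ hy ▸ rfl)
    exact P.apart_irrefl x (this ▸ hxy)
  apart_mono := by
    rintro a b c hab ⟨x, hx, y, hy, hxy⟩
    have hbne : b.1 ≠ [] := by
      intro h
      rw [h] at hy
      simp at hy
    have hane : a.1 ≠ [] := by
      intro h
      exact hbne (List.prefix_nil.mp (h ▸ hab))
    obtain ⟨z, hz⟩ : ∃ z, z ∈ a.1.getLast? := by
      rcases h : a.1.getLast? with _ | z
      · exact absurd (List.getLast?_eq_none_iff.mp h) hane
      · exact ⟨z, rfl⟩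
    have hzy : P.refines z y := P.last_refines_of_prefix a.2 hab hz hy
    exact ⟨x, hx, z, hz, P.apart_mono _ _ _ hzy hxy⟩
  refines_refl a := List.prefix_refl a.1
  refines_trans _ _ _ h1 h2 := h2.trans h1
  refines_antisymm a b h1 h2 :=
    Subtype.ext (h2.eq_of_length (le_antisymm h2.length_le h1.length_le))

end PreNaturalSpace

open Classical in
/-- `p♯(n)` : the `≺`-trail obtained from `p₀, …, p_{n-1}` by deleting repetitions
(for a shrinking sequence `p`, repetitions are consecutive). -/
noncomputable def segList {V : Type} (p : ℕ → V) : ℕ → List V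
  | 0 => []
  | n + 1 =>
    if (segList p n).getLast? = some (p n) then segList p n
    else segList p n ++ [p n]

namespace PreNaturalSpace

variable {V W : Type} (P : PreNaturalSpace V)

/-- The map on trail dots sending a nonempty trail to its last element and
the empty trail to `m`. -/
def lastDot (m : V) (q : P.Trail) : V := q.1.getLast?.getD m

/-- `g` is the point map induced by a trail morphism `f` (a refinement morphism
on the trail space): `g p = f (p♯(0)), f (p♯(1)), …`. -/
def InducedByTrailMorphism (Q : PreNaturalSpace W) (f : RefMorphism P.trailSpace Q)
    (g : P.Pt → Q.Pt) : Prop :=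
  ∀ p : P.Pt, ∃ t : P.trailSpace.Pt, (∀ n, (t.1 n).1 = segList p.1 n) ∧ g p = f.pointMap t

/-- `g` is a natural morphism map: induced by a refinement morphism or by a trail morphism. -/
def IsNaturalMorphismMap (Q : PreNaturalSpace W) (g : P.Pt → Q.Pt) : Prop :=
  (∃ f : RefMorphism P Q, ∀ p, g p = f.pointMap p) ∨
  (∃ f : RefMorphism P.trailSpace Q, P.InducedByTrailMorphism Q f g)

/-- Two natural spaces are isomorphic: natural morphisms both ways, inverse up to `≡`. -/
def AreIsomorphic (Q : PreNaturalSpace W) : Prop :=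
  ∃ (f : P.Pt → Q.Pt) (g : Q.Pt → P.Pt),
    P.IsNaturalMorphismMap Q f ∧ Q.IsNaturalMorphismMap P g ∧
    (∀ x, P.pEquiv (g (f x)) x) ∧ (∀ y, Q.pEquiv (f (g y)) y)

/-- A natural space is a basic neighborhood space iff it is isomorphic to a basic-open space. -/
def IsBasicNbhdSpace : Prop :=
  ∃ (W' : Type) (Q : PreNaturalSpace W'), Q.IsNaturalSpace ∧ Q.BasicOpen ∧ P.AreIsomorphic Q

/-! ## Trees, treas, spreads, spraids, fans -/

/-- `a` is a successor of `c`. -/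
def IsSucc (a c : V) : Prop := P.strict a c ∧ ∀ b, P.strict a b → P.refines b c → b = c

/-- A successor-trail (as a list, each entry a successor of the previous one). -/
def SuccChain (l : List V) : Prop := l.Chain' fun x y => P.IsSucc y x

/-- A successor-trail from `m` to `a`. -/
def IsSuccTrailFromTo (m a : V) (l : List V) : Prop :=
  P.SuccChain l ∧ l.head? = some m ∧ l.getLast? = some a

/-- `(V,⊑)` is a tree. -/
def IsTree : Prop :=
  ∃ m, (∀ a, P.refines a m) ∧ ∀ a, ∃! l : List V, P.IsSuccTrailFromTo m a l

/-- `(V,⊑)` is a trea. -/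
def IsTrea : Prop :=
  ∃ m, (∀ a, P.refines a m) ∧ (∀ a, { b | P.refines a b }.Finite) ∧
    ∀ a, ∃ g : ℕ, ∀ l : List V, P.IsSuccTrailFromTo m a l → l.length = g

/-- Every infinite successor-trail is a point. -/
def SuccTrailsArePoints : Prop :=
  ∀ q : ℕ → V, (∀ n, P.IsSucc (q (n + 1)) (q n)) → P.IsPoint q

def IsSpread : Prop := P.IsTree ∧ P.SuccTrailsArePoints

def IsSpraid : Prop := P.IsTrea ∧ P.SuccTrailsArePoints

/-- Finitely branching: every dot has finitely many successors. -/
def FinBranching : Prop := ∀ a : V, { b | P.IsSucc b a }.Finite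

def IsFan : Prop := P.IsSpread ∧ P.FinBranching

def IsFann : Prop := P.IsSpraid ∧ P.FinBranching

end PreNaturalSpace
/-! ## Natural Baire space and natural Cantor space -/

/-- Natural Baire space: dots are finite sequences of naturals, `b ⊑ a` iff
`a` is an initial segment of `b`, apart iff incomparable. -/
noncomputable def BairePre : PreNaturalSpace (List ℕ) where
  countable' := inferInstance
  apart a b := ¬ a <+: b ∧ ¬ b <+: a
  refines a b := b <+: a
  apart_dec := Classical.decRel _
  refines_dec := Classical.decRel _
  apart_symm _ _ h := ⟨h.2, h.1⟩
  apart_irrefl a h := h.1 (List.prefix_refl a)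
  apart_mono := by
    intro a b c hab hcb
    constructor
    · intro hca
      rcases List.prefix_or_prefix_of_prefix hca hab with h | h
      · exact hcb.1 h
      · exact hcb.2 h
    · intro hac
      exact hcb.2 (hab.trans hac)
  refines_refl a := List.prefix_refl a
  refines_trans _ _ _ h1 h2 := h2.trans h1
  refines_antisymm _ _ h1 h2 := h2.eq_of_length (le_antisymm h2.length_le h1.length_le)

/-- Natural Cantor space: the restriction of natural Baire space to finite 0-1 sequences. -/
noncomputable def CantorPre : PreNaturalSpace ({ l : List ℕ | ∀ x ∈ l, x ≤ 1 }) :=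
  BairePre.restrict { l : List ℕ | ∀ x ∈ l, x ≤ 1 }

/-- The sequence of initial segments of `α ∈ ℕ^ℕ`. -/
def initSegs (α : ℕ → ℕ) (n : ℕ) : List ℕ := (List.range n).map α


/-! ## Auxiliary development for Statement 13 -/

namespace PreNaturalSpace

variable {V : Type} (P : PreNaturalSpace V)

lemma not_apart_of_refines {a b : V} (h : P.refines a b) : ¬ P.apart a b :=
  fun hab => P.apart_irrefl a (P.apart_mono a b a h hab)

lemma not_apart_common {a b c : V} (h1 : P.refines c a) (h2 : P.refines c b) :
    ¬ P.apart a b := by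
  intro hab
  have h3 : P.apart a c := P.apart_mono c b a h2 hab
  exact P.not_apart_of_refines h1 (P.apart_symm _ _ h3)

lemma apart_of_refines_apart {a b c : V} (h1 : P.refines a b) (h2 : P.apart b c) :
    P.apart a c :=
  P.apart_symm _ _ (P.apart_mono a b c h1 (P.apart_symm _ _ h2))

lemma strict_left {a b c : V} (h1 : P.refines c b) (h2 : P.strict b a) : P.strict c a := by
  refine ⟨P.refines_trans _ _ _ h1 h2.1, fun he => h2.2 ?_⟩
  subst he
  exact P.refines_antisymm _ _ h2.1 h1

lemma strict_right {a b c : V} (h1 : P.strict c b) (h2 : P.refines b a) : P.strict c a := by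
  refine ⟨P.refines_trans _ _ _ h1.1 h2, fun he => h1.2 ?_⟩
  subst he
  exact P.refines_antisymm _ _ h1.1 h2

lemma exists_max_finset (S : Finset V) (h : S.Nonempty) :
    ∃ b ∈ S, ∀ c ∈ S, P.refines b c → b = c := by
  classical
  induction S using Finset.induction_on with
  | empty => exact absurd h (by simp)
  | @insert a s hnotmem ih =>
    by_cases hs : s.Nonempty
    · obtain ⟨b, hb, hmax⟩ := ih hs
      by_cases hba : P.strict b a
      · refine ⟨a, Finset.mem_insert_self a s, ?_⟩
        intro c hc hac
        rcases Finset.mem_insert.mp hc with rfl | hcs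
        · rfl
        · have hbc : P.refines b c := P.refines_trans _ _ _ hba.1 hac
          have := hmax c hcs hbc
          subst this
          exact absurd (P.refines_antisymm _ _ hba.1 hac) hba.2
      · refine ⟨b, Finset.mem_insert_of_mem hb, ?_⟩
        intro c hc hbc
        rcases Finset.mem_insert.mp hc with rfl | hcs
        · by_cases he : b = c
          · exact he
          · exact absurd ⟨hbc, he⟩ hba
        · exact hmax c hcs hbc
    · obtain ⟨a', ha'⟩ := h
      rcases Finset.mem_insert.mp ha' with rfl | hcs
      · refine ⟨a', ha', ?_⟩
        intro c hc _
        rcases Finset.mem_insert.mp hc with rfl | hcs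
        · rfl
        · exact absurd ⟨c, hcs⟩ hs
      · exact absurd ⟨a', hcs⟩ hs

lemma exists_succ_above (hfin : ∀ a, { b | P.refines a b }.Finite) {a b : V}
    (h : P.strict b a) : ∃ c, P.IsSucc c a ∧ P.refines b c := by
  classical
  have hS : { c | P.refines b c ∧ P.strict c a }.Finite :=
    (hfin b).subset (fun c hc => hc.1)
  have hbmem : b ∈ hS.toFinset := by
    rw [Set.Finite.mem_toFinset]
    exact ⟨P.refines_refl b, h⟩
  obtain ⟨c, hcmem, hcmax⟩ := P.exists_max_finset hS.toFinset ⟨b, hbmem⟩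
  rw [Set.Finite.mem_toFinset] at hcmem
  refine ⟨c, ⟨hcmem.2, ?_⟩, hcmem.1⟩
  intro d hd hda
  by_contra hne
  have hdS : d ∈ hS.toFinset := by
    rw [Set.Finite.mem_toFinset]
    exact ⟨P.refines_trans _ _ _ hcmem.1 hd.1, hda, hne⟩
  exact hd.2 (hcmax d hdS hd.1)

/-- The binary-choice automaton on a finitely-branching trea. -/
def auto (child : V → List V) (st : V × List V) (i : ℕ) : V × List V :=
  match st.2 with
  | [b] => (b, child b)
  | L => if i = 0 then (st.1, L.take ((L.length + 1) / 2))
         else (st.1, L.drop ((L.length + 1) / 2))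

/-- Invariant of the automaton: the candidate list is a nonempty list of successors. -/
def Inv (child : V → List V) (st : V × List V) : Prop :=
  st.2 ≠ [] ∧ ∀ b ∈ st.2, P.IsSucc b st.1

variable {child : V → List V}

lemma auto_single (a b : V) (i : ℕ) : auto child (a, [b]) i = (b, child b) := rfl

lemma auto_big (a x y : V) (t : List V) (i : ℕ) :
    auto child (a, x :: y :: t) i =
      if i = 0 then (a, (x :: y :: t).take (((x :: y :: t).length + 1) / 2))
      else (a, (x :: y :: t).drop (((x :: y :: t).length + 1) / 2)) := rfl

section AutoLemmas

variable (hc : ∀ a, child a ≠ [] ∧ ∀ b, (P.IsSucc b a ↔ b ∈ child a))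

include hc

lemma inv_auto {st : V × List V} (hst : P.Inv child st) (i : ℕ) :
    P.Inv child (auto child st i) := by
  obtain ⟨a, L⟩ := st
  rcases L with _ | ⟨x, _ | ⟨y, t⟩⟩
  · exact absurd rfl hst.1
  · rw [auto_single]
    exact ⟨(hc x).1, fun b hb => ((hc x).2 b).mpr hb⟩
  · rw [auto_big]
    have hk1 : 1 ≤ ((x :: y :: t).length + 1) / 2 := by simp; omega
    have hk2 : ((x :: y :: t).length + 1) / 2 < (x :: y :: t).length := by simp; omega
    split
    · refine ⟨?_, fun b hb => hst.2 b (List.take_subset _ _ hb)⟩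
      intro hnil
      have := congrArg List.length hnil
      simp at this
    · refine ⟨?_, fun b hb => hst.2 b (List.drop_subset _ _ hb)⟩
      intro hnil
      have := congrArg List.length hnil
      simp at this
      omega

lemma auto_fst {st : V × List V} (hst : P.Inv child st) (i : ℕ) :
    (auto child st i).1 = st.1 ∨ P.IsSucc (auto child st i).1 st.1 := by
  obtain ⟨a, L⟩ := st
  rcases L with _ | ⟨x, _ | ⟨y, t⟩⟩
  · exact absurd rfl hst.1
  · rw [auto_single]
    exact Or.inr (hst.2 x (by simp))
  · rw [auto_big]
    split <;> exact Or.inl rfl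

lemma auto_refines {st : V × List V} (hst : P.Inv child st) (i : ℕ) :
    P.refines (auto child st i).1 st.1 := by
  rcases P.auto_fst hc hst i with h | h
  · exact h ▸ P.refines_refl _
  · exact h.1.1

lemma auto_len {st : V × List V} (hst : P.Inv child st) (i : ℕ)
    (h : (auto child st i).1 = st.1) :
    (auto child st i).2.length < st.2.length := by
  obtain ⟨a, L⟩ := st
  rcases L with _ | ⟨x, _ | ⟨y, t⟩⟩
  · exact absurd rfl hst.1
  · rw [auto_single] at h
    exact absurd h (hst.2 x (by simp)).1.2
  · rw [auto_big]
    rw [auto_big] at h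
    split <;> simp <;> omega

lemma foldl_inv {st : V × List V} (hst : P.Inv child st) (u : List ℕ) :
    P.Inv child (u.foldl (auto child) st) := by
  induction u generalizing st with
  | nil => exact hst
  | cons i v ih => exact ih (P.inv_auto hc hst i)

lemma foldl_refines {st : V × List V} (hst : P.Inv child st) (u : List ℕ) :
    P.refines (u.foldl (auto child) st).1 st.1 := by
  induction u generalizing st with
  | nil => exact P.refines_refl _
  | cons i v ih =>
    exact P.refines_trans _ _ _ (ih (P.inv_auto hc hst i)) (P.auto_refines hc hst i)

lemma foldl_progress (u : List ℕ) :
    ∀ st : V × List V, P.Inv child st → st.2.length ≤ u.length →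
      P.strict (u.foldl (auto child) st).1 st.1 := by
  induction u with
  | nil =>
    intro st hst hlen
    exact absurd (List.length_eq_zero_iff.mp (Nat.le_zero.mp hlen)) hst.1
  | cons i v ih =>
    intro st hst hlen
    rcases P.auto_fst hc hst i with h | h
    · have hlt := P.auto_len hc hst i h
      have := ih (auto child st i) (P.inv_auto hc hst i) (by simp at hlen ⊢; omega)
      rw [h] at this
      exact this
    · have href := P.foldl_refines hc (P.inv_auto hc hst i) v
      exact P.strict_left href h.1

lemma nav : ∀ (n : ℕ) (L : List V) (a b : V), L.length ≤ n →
    (∀ c ∈ L, P.IsSucc c a) → b ∈ L →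
      ∃ u : List ℕ, (∀ i ∈ u, i ≤ 1) ∧
        u.foldl (auto child) (a, L) = (b, child b) := by
  intro n
  induction n with
  | zero =>
    intro L a b hlen _ hb
    rw [List.length_eq_zero_iff.mp (Nat.le_zero.mp hlen)] at hb
    exact absurd hb List.not_mem_nil
  | succ n ih =>
    intro L a b hlen hall hb
    rcases L with _ | ⟨x, _ | ⟨y, t⟩⟩
    · exact absurd hb List.not_mem_nil
    · have hbx : b = x := by simpa using hb
      subst hbx
      exact ⟨[0], by simp, by rw [List.foldl_cons, List.foldl_nil, auto_single]⟩
    · set L := x :: y :: t with hL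
      set k := (L.length + 1) / 2 with hk
      have hk1 : 1 ≤ k := by simp [hk, hL]; omega
      have hk2 : k < L.length := by simp [hk, hL]; omega
      have hsplit : L.take k ++ L.drop k = L := List.take_append_drop k L
      rcases (by rw [← hsplit] at hb; exact List.mem_append.mp hb) with hmem | hmem
      · obtain ⟨u, hu1, hu2⟩ := ih (L.take k) a b
          (by rw [List.length_take]; omega)
          (fun c hcm => hall c (List.take_subset _ _ hcm)) hmem
        refine ⟨0 :: u, ?_, ?_⟩
        · intro i hi
          rcases List.mem_cons.mp hi with rfl | hi
          · omega
          · exact hu1 i hi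
        · rw [List.foldl_cons, auto_big, if_pos rfl]
          exact hu2
      · obtain ⟨u, hu1, hu2⟩ := ih (L.drop k) a b
          (by rw [List.length_drop]; omega)
          (fun c hcm => hall c (List.drop_subset _ _ hcm)) hmem
        refine ⟨1 :: u, ?_, ?_⟩
        · intro i hi
          rcases List.mem_cons.mp hi with rfl | hi
          · omega
          · exact hu1 i hi
        · rw [List.foldl_cons, auto_big, if_neg one_ne_zero]
          exact hu2

end AutoLemmas

lemma dedup (d : ℕ → V) (hstep : ∀ k, d (k + 1) = d k ∨ P.IsSucc (d (k + 1)) (d k))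
    (hprog : ∀ k, ∃ k', k < k' ∧ d k' ≠ d k) :
    ∃ z : ℕ → V, (∀ j, P.IsSucc (z (j + 1)) (z j)) ∧ ∀ j, ∃ k, z j = d k := by
  classical
  have hleast : ∀ k, ∃ k', (k < k' ∧ d k' ≠ d k) ∧
      ∀ k'', k < k'' ∧ d k'' ≠ d k → k' ≤ k'' :=
    fun k => ⟨Nat.find (hprog k), Nat.find_spec (hprog k),
      fun k'' h => Nat.find_min' (hprog k) h⟩
  choose Cn hC1 hC2 using hleast
  let C : ℕ → ℕ := fun j => Nat.rec 0 (fun _ Cj => Cn Cj) j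
  have hCs : ∀ j, C (j + 1) = Cn (C j) := fun j => rfl
  refine ⟨fun j => d (C j), ?_, fun j => ⟨C j, rfl⟩⟩
  intro j
  have h1 : C j < C (j + 1) := (hC1 (C j)).1
  have hne : d (C (j + 1)) ≠ d (C j) := (hC1 (C j)).2
  have hk'pos : 1 ≤ C (j + 1) := Nat.lt_of_le_of_lt (Nat.zero_le _) h1
  have hprev : d (C (j + 1) - 1) = d (C j) := by
    rcases Nat.lt_or_ge (C j) (C (j + 1) - 1) with hlt | hge
    · by_contra hne'
      have hle := hC2 (C j) (C (j + 1) - 1) ⟨hlt, hne'⟩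
      rw [hCs j] at hk'pos hle
      omega
    · have : C (j + 1) - 1 = C j := by omega
      rw [this]
  have hst := hstep (C (j + 1) - 1)
  rw [Nat.sub_add_cancel hk'pos] at hst
  rcases hst with he | hsucc
  · exact absurd (he.trans hprev) hne
  · rw [hprev] at hsucc
    exact hsucc

end PreNaturalSpace

/-! ### Cantor-space helpers -/

lemma cantor_refines_iff (a b : ({ l : List ℕ | ∀ x ∈ l, x ≤ 1 } : Set (List ℕ))) :
    CantorPre.refines a b ↔ b.1 <+: a.1 := Iff.rfl

lemma cantor_apart_iff (a b : ({ l : List ℕ | ∀ x ∈ l, x ≤ 1 } : Set (List ℕ))) :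
    CantorPre.apart a b ↔ ¬ a.1 <+: b.1 ∧ ¬ b.1 <+: a.1 := Iff.rfl

lemma cantor_comparable (p : CantorPre.Pt) (i j : ℕ) :
    (p.1 i).1 <+: (p.1 j).1 ∨ (p.1 j).1 <+: (p.1 i).1 := by
  have hi : (p.1 i).1 <+: (p.1 (max i j)).1 :=
    (cantor_refines_iff _ _).mp (CantorPre.refines_of_le p.2.mono (le_max_left i j))
  have hj : (p.1 j).1 <+: (p.1 (max i j)).1 :=
    (cantor_refines_iff _ _).mp (CantorPre.refines_of_le p.2.mono (le_max_right i j))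
  exact List.prefix_or_prefix_of_prefix hi hj

lemma cantor_strict_len {a b : ({ l : List ℕ | ∀ x ∈ l, x ≤ 1 } : Set (List ℕ))}
    (h : CantorPre.strict a b) : b.1.length < a.1.length := by
  have hpre : b.1 <+: a.1 := h.1
  refine lt_of_le_of_ne hpre.length_le (fun he => h.2 (Subtype.ext ?_))
  exact (hpre.eq_of_length he).symm

lemma cantor_unbounded (p : CantorPre.Pt) (k : ℕ) : ∃ m, k ≤ (p.1 m).1.length := by
  induction k with
  | zero => exact ⟨0, Nat.zero_le _⟩
  | succ k ih =>
    obtain ⟨m, hm⟩ := ih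
    obtain ⟨m', hm'⟩ := p.2.shrink m
    exact ⟨m', by have := cantor_strict_len hm'; omega⟩

lemma initSegs_length (α : ℕ → ℕ) (n : ℕ) : (initSegs α n).length = n := by
  simp [initSegs]

lemma initSegs_getElem (α : ℕ → ℕ) (n k : ℕ) (hk : k < (initSegs α n).length) :
    (initSegs α n)[k] = α k := by
  simp [initSegs]

lemma initSegs_prefix (α : ℕ → ℕ) {k k' : ℕ} (h : k ≤ k') :
    initSegs α k <+: initSegs α k' := by
  have : initSegs α k = (initSegs α k').take k := by
    rw [initSegs, initSegs, ← List.map_take, List.take_range, Nat.min_eq_left h]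
  rw [this]
  exact List.take_prefix _ _

lemma initSegs_succ (α : ℕ → ℕ) (k : ℕ) :
    initSegs α (k + 1) = initSegs α k ++ [α k] := by
  rw [initSegs, initSegs, List.range_succ, List.map_append, List.map_singleton]

lemma exists_alpha (p : CantorPre.Pt) : ∃ α : ℕ → ℕ, (∀ k, α k ≤ 1) ∧
    ∀ n, (p.1 n).1 = initSegs α ((p.1 n).1.length) := by
  classical
  choose N hN using fun k => cantor_unbounded p (k + 1)
  refine ⟨fun k => (p.1 (N k)).1.getD k 0, fun k => ?_, fun n => ?_⟩
  · show (p.1 (N k)).1.getD k 0 ≤ 1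
    have hlt : k < (p.1 (N k)).1.length := hN k
    rw [List.getD_eq_getElem _ _ hlt]
    exact (p.1 (N k)).2 _ (List.getElem_mem hlt)
  · apply List.ext_getElem
    · rw [initSegs_length]
    · intro k hk1 hk2
      rw [initSegs_getElem]
      have hlt : k < (p.1 (N k)).1.length := hN k
      rw [List.getD_eq_getElem _ _ hlt]
      rcases cantor_comparable p n (N k) with h | h
      · exact h.getElem hk1
      · exact (h.getElem hlt).symm

/-- The `n`-th dot of the Cantor point determined by a binary sequence. -/
def binDot (α : ℕ → ℕ) (hα : ∀ k, α k ≤ 1) (n : ℕ) :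
    ({ l : List ℕ | ∀ x ∈ l, x ≤ 1 } : Set (List ℕ)) :=
  ⟨initSegs α n, by
    intro x hx
    simp only [initSegs, List.mem_map, List.mem_range] at hx
    obtain ⟨k, _, rfl⟩ := hx
    exact hα k⟩

lemma binDot_isPoint (α : ℕ → ℕ) (hα : ∀ k, α k ≤ 1) :
    CantorPre.IsPoint (binDot α hα) := by
  constructor
  · intro n
    exact (cantor_refines_iff _ _).mpr (initSegs_prefix α (Nat.le_succ n))
  · intro n
    refine ⟨n + 1, (cantor_refines_iff _ _).mpr (initSegs_prefix α (Nat.le_succ n)), ?_⟩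
    intro he
    have := congrArg (fun t => t.1.length) he
    simp only [binDot, initSegs_length] at this
    omega
  · intro a b hab
    rw [cantor_apart_iff] at hab
    by_contra hno
    push_neg at hno
    have h1 := hno (a.1.length + b.1.length)
    have ha : a.1 <+: initSegs α (a.1.length + b.1.length) := by
      have := h1.1
      rw [cantor_apart_iff] at this
      push_neg at this
      rcases Classical.em ((binDot α hα (a.1.length + b.1.length)).1 <+: a.1) with h | h
      · have hlen := h.length_le
        rw [show (binDot α hα (a.1.length + b.1.length)).1
            = initSegs α (a.1.length + b.1.length) from rfl, initSegs_length] at hlen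
        have hb0 : b.1.length = 0 := by omega
        rw [List.length_eq_zero_iff.mp hb0] at hab
        exact absurd (List.nil_prefix) hab.2
      · exact this h
    have hb : b.1 <+: initSegs α (a.1.length + b.1.length) := by
      have := h1.2
      rw [cantor_apart_iff] at this
      push_neg at this
      rcases Classical.em ((binDot α hα (a.1.length + b.1.length)).1 <+: b.1) with h | h
      · have hlen := h.length_le
        rw [show (binDot α hα (a.1.length + b.1.length)).1
            = initSegs α (a.1.length + b.1.length) from rfl, initSegs_length] at hlen
        have ha0 : a.1.length = 0 := by omega
        rw [List.length_eq_zero_iff.mp ha0] at hab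
        exact absurd (List.nil_prefix) hab.1
      · exact this h
    rcases List.prefix_or_prefix_of_prefix ha hb with h | h
    · exact hab.1 h
    · exact hab.2 h

/-- classical: for every fann `𝒱` there is a natural morphism from
natural Cantor space to `𝒱`, surjective up to equivalence. -/
theorem stmt13 {V : Type} (P : PreNaturalSpace V) (hP : P.IsNaturalSpace)
    (hfann : P.IsFann) :
    ∃ f : CantorPre.Pt → P.Pt, CantorPre.IsNaturalMorphismMap P f ∧
      ∀ x : P.Pt, ∃ p : CantorPre.Pt, P.pEquiv (f p) x := by
  classical
  obtain ⟨⟨m0, hm0⟩, hinh⟩ := hP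
  obtain ⟨⟨htrea, hstp⟩, hfb⟩ := hfann
  obtain ⟨m1, hm1, hfin, hgrd⟩ := htrea
  have hsuccab : ∀ {a b : V}, P.strict b a → ∃ c, P.IsSucc c a ∧ P.refines b c :=
    fun h => P.exists_succ_above hfin h
  have hsuccne : ∀ a : V, ∃ b, P.IsSucc b a := by
    intro a
    obtain ⟨q, hq, j, hj⟩ := hinh a
    obtain ⟨c, hc1, -⟩ := hsuccab hj
    exact ⟨c, hc1⟩
  set child : V → List V := fun a => (hfb a).toFinset.toList with hchild
  have hc : ∀ a, child a ≠ [] ∧ ∀ b, (P.IsSucc b a ↔ b ∈ child a) := by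
    intro a
    constructor
    · intro h
      obtain ⟨b, hb⟩ := hsuccne a
      have hmem : b ∈ child a := by
        simp only [hchild, Finset.mem_toList, Set.Finite.mem_toFinset]
        exact hb
      rw [h] at hmem
      exact List.not_mem_nil hmem
    · intro b
      simp only [hchild, Finset.mem_toList, Set.Finite.mem_toFinset]
      exact Iff.rfl
  set dec : List ℕ → V × List V :=
    fun s => s.foldl (PreNaturalSpace.auto child) (m0, child m0) with hdec
  have hinv0 : P.Inv child (m0, child m0) := ⟨(hc m0).1, fun b hb => ((hc m0).2 b).mpr hb⟩
  have hdecinv : ∀ s, P.Inv child (dec s) := fun s => P.foldl_inv hc hinv0 s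
  have hdecapp : ∀ s u, dec (s ++ u) = u.foldl (PreNaturalSpace.auto child) (dec s) :=
    fun s u => List.foldl_append
  have hdecmono : ∀ {s t : List ℕ}, s <+: t → P.refines (dec t).1 (dec s).1 := by
    rintro s t ⟨u, rfl⟩
    rw [hdecapp]
    exact P.foldl_refines hc (hdecinv s) u
  have hdmono : ∀ (α : ℕ → ℕ) {k k'}, k ≤ k' →
      P.refines (dec (initSegs α k')).1 (dec (initSegs α k)).1 :=
    fun α _ _ h => hdecmono (initSegs_prefix α h)
  have hdstep : ∀ (α : ℕ → ℕ) (k : ℕ), dec (initSegs α (k + 1)) =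
      PreNaturalSpace.auto child (dec (initSegs α k)) (α k) := by
    intro α k
    rw [initSegs_succ, hdecapp]
    rfl
  have hdprog : ∀ (α : ℕ → ℕ) (k : ℕ), ∃ k', k < k' ∧
      P.strict (dec (initSegs α k')).1 (dec (initSegs α k)).1 := by
    intro α k
    refine ⟨k + (dec (initSegs α k)).2.length, ?_, ?_⟩
    · have hpos : 0 < (dec (initSegs α k)).2.length :=
        List.length_pos_iff.mpr (hdecinv (initSegs α k)).1
      omega
    · obtain ⟨u, hu⟩ := initSegs_prefix α (Nat.le_add_right k ((dec (initSegs α k)).2.length))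
      have hulen : (dec (initSegs α k)).2.length ≤ u.length := by
        have := congrArg List.length hu
        rw [List.length_append, initSegs_length, initSegs_length] at this
        omega
      rw [← hu, hdecapp]
      exact P.foldl_progress hc u _ (hdecinv _) hulen
  -- the refinement morphism
  have hmaps : ∀ p : ℕ → ({ l : List ℕ | ∀ x ∈ l, x ≤ 1 } : Set (List ℕ)),
      CantorPre.IsPoint p → P.IsPoint (fun n => (dec ((p n).1)).1) := by
    intro pf hpf
    obtain ⟨α, hα1, hα2⟩ := exists_alpha ⟨pf, hpf⟩
    have hα2' : ∀ n, (pf n).1 = initSegs α ((pf n).1.length) := hα2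
    constructor
    · intro n
      exact hdecmono ((cantor_refines_iff _ _).mp (hpf.mono n))
    · intro n
      obtain ⟨k', hk'1, hk'2⟩ := hdprog α ((pf n).1.length)
      obtain ⟨m, hm⟩ := cantor_unbounded ⟨pf, hpf⟩ k'
      refine ⟨m, ?_⟩
      show P.strict (dec ((pf m).1)).1 (dec ((pf n).1)).1
      rw [hα2' m, hα2' n]
      exact P.strict_left (hdmono α hm) hk'2
    · intro a b hab
      have hstepd : ∀ k, (dec (initSegs α (k + 1))).1 = (dec (initSegs α k)).1 ∨
          P.IsSucc (dec (initSegs α (k + 1))).1 (dec (initSegs α k)).1 := by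
        intro k
        rw [hdstep α k]
        exact P.auto_fst hc (hdecinv _) (α k)
      have hprogd : ∀ k, ∃ k', k < k' ∧
          (dec (initSegs α k')).1 ≠ (dec (initSegs α k)).1 := by
        intro k
        obtain ⟨k', h1, h2⟩ := hdprog α k
        exact ⟨k', h1, h2.2⟩
      obtain ⟨z, hzsucc, hzd⟩ := P.dedup (fun k => (dec (initSegs α k)).1) hstepd hprogd
      have hz : P.IsPoint z := hstp z hzsucc
      obtain ⟨j, hj⟩ := hz.decides a b hab
      obtain ⟨k, hk⟩ := hzd j
      obtain ⟨m, hm⟩ := cantor_unbounded ⟨pf, hpf⟩ k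
      have hrm : P.refines (dec ((pf m).1)).1 (z j) := by
        rw [hα2' m, hk]
        exact hdmono α hm
      refine ⟨m, ?_⟩
      rcases hj with hj | hj
      · exact Or.inl (P.apart_of_refines_apart hrm hj)
      · exact Or.inr (P.apart_of_refines_apart hrm hj)
  have hrefl : ∀ p q : ℕ → ({ l : List ℕ | ∀ x ∈ l, x ≤ 1 } : Set (List ℕ)),
      CantorPre.IsPoint p → CantorPre.IsPoint q →
      (∃ n, P.apart ((dec ((p n).1)).1) ((dec ((q n).1)).1)) →
      ∃ n, CantorPre.apart (p n) (q n) := by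
    intro pf qf hpf hqf h
    obtain ⟨n, hn⟩ := h
    by_contra hno
    push_neg at hno
    have hcomp : (pf n).1 <+: (qf n).1 ∨ (qf n).1 <+: (pf n).1 := by
      have h2 := hno n
      rw [cantor_apart_iff] at h2
      tauto
    rcases hcomp with h | h
    · exact P.not_apart_of_refines (hdecmono h) (P.apart_symm _ _ hn)
    · exact P.not_apart_of_refines (hdecmono h) hn
  let F : RefMorphism CantorPre P := ⟨fun s => (dec s.1).1, hmaps, hrefl⟩
  refine ⟨F.pointMap, Or.inl ⟨F, fun p => rfl⟩, ?_⟩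
  intro x
  -- build a successor trail equivalent to x
  have key : ∀ st : V × ℕ, P.refines (x.1 st.2) st.1 →
      ∃ st' : V × ℕ, P.IsSucc st'.1 st.1 ∧ P.refines (x.1 st'.2) st'.1 := by
    rintro ⟨a, n⟩ h
    obtain ⟨mm, hmm⟩ := x.2.shrink n
    have h1 : P.refines (x.1 (max mm n)) (x.1 mm) := P.refines_of_le x.2.mono (le_max_left mm n)
    have h2 : P.strict (x.1 (max mm n)) a := P.strict_right (P.strict_left h1 hmm) h
    obtain ⟨c, hc1, hc2⟩ := hsuccab h2
    exact ⟨(c, max mm n), hc1, hc2⟩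
  choose G hG1 hG2 using key
  set FF : V × ℕ → V × ℕ :=
    fun st => if h : P.refines (x.1 st.2) st.1 then G st h else st with hFF
  set S : ℕ → V × ℕ := fun j => FF^[j] (m0, 0) with hS
  have hSstep : ∀ j, S (j + 1) = FF (S j) := fun j => Function.iterate_succ_apply' FF j _
  have hSall : ∀ j, P.refines (x.1 (S j).2) (S j).1 := by
    intro j
    induction j with
    | zero => exact hm0 _
    | succ j ih =>
      rw [hSstep j]
      simp only [hFF]
      rw [dif_pos ih]
      exact hG2 (S j) ih
  have hSsucc : ∀ j, P.IsSucc (S (j + 1)).1 (S j).1 := by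
    intro j
    rw [hSstep j]
    simp only [hFF]
    rw [dif_pos (hSall j)]
    exact hG1 (S j) (hSall j)
  set z : ℕ → V := fun j => (S j).1 with hzdef
  have hzpt : P.IsPoint z := hstp z hSsucc
  have hzx : P.pEquiv ⟨z, hzpt⟩ x := by
    rintro ⟨n, hap⟩
    have h1 : P.refines (x.1 (max (S n).2 n)) (z n) :=
      P.refines_trans _ _ _ (P.refines_of_le x.2.mono (le_max_left _ _)) (hSall n)
    have h2 : P.refines (x.1 (max (S n).2 n)) (x.1 n) :=
      P.refines_of_le x.2.mono (le_max_right _ _)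
    exact P.not_apart_common h1 h2 hap
  -- navigate the automaton along z
  have hmem : ∀ j, z (j + 1) ∈ child (z j) := fun j => ((hc (z j)).2 _).mp (hSsucc j)
  have hnavj : ∀ j, ∃ u : List ℕ, (∀ i ∈ u, i ≤ 1) ∧
      u.foldl (PreNaturalSpace.auto child) (z j, child (z j)) = (z (j + 1), child (z (j + 1))) :=
    fun j => P.nav hc (child (z j)).length (child (z j)) (z j) (z (j + 1)) le_rfl
      (fun c hcm => ((hc (z j)).2 c).mpr hcm) (hmem j)
  choose u hu1 hu2 using hnavj
  set T : ℕ → List ℕ := fun j => Nat.rec [] (fun j' Tj => Tj ++ u j') j with hT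
  have hTs : ∀ j, T (j + 1) = T j ++ u j := fun j => rfl
  have hdecT : ∀ j, dec (T j) = (z j, child (z j)) := by
    intro j
    induction j with
    | zero => rfl
    | succ j ih => rw [hTs j, hdecapp, ih, hu2 j]
  have hTbits : ∀ j, ∀ i ∈ T j, i ≤ 1 := by
    intro j
    induction j with
    | zero => intro i hi; exact absurd hi List.not_mem_nil
    | succ j ih =>
      intro i hi
      rw [hTs j] at hi
      rcases List.mem_append.mp hi with h | h
      · exact ih i h
      · exact hu1 j i h
  have hune : ∀ j, u j ≠ [] := by
    intro j h
    have h2 := hu2 j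
    rw [h, List.foldl_nil] at h2
    exact (hSsucc j).1.2 (congrArg Prod.fst h2).symm
  have hTlen : ∀ j, j ≤ (T j).length := by
    intro j
    induction j with
    | zero => exact Nat.zero_le _
    | succ j ih =>
      rw [hTs j, List.length_append]
      have := List.length_pos_iff.mpr (hune j)
      omega
  have hTmono : ∀ {i j}, i ≤ j → T i <+: T j := by
    intro i j h
    induction h with
    | refl => exact List.prefix_refl _
    | @step m h ih =>
      rw [hTs m]
      exact ih.trans (List.prefix_append _ _)
  set α : ℕ → ℕ := fun k => (T (k + 1)).getD k 0 with hαdef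
  have hα : ∀ k, α k ≤ 1 := by
    intro k
    show (T (k + 1)).getD k 0 ≤ 1
    rcases Nat.lt_or_ge k (T (k + 1)).length with h | h
    · rw [List.getD_eq_getElem _ _ h]
      exact hTbits (k + 1) _ (List.getElem_mem h)
    · rw [List.getD_eq_default _ _ h]
      omega
  have hTα : ∀ j, T j = initSegs α ((T j).length) := by
    intro j
    apply List.ext_getElem
    · rw [initSegs_length]
    · intro k hk1 hk2
      rw [initSegs_getElem]
      show (T j)[k] = (T (k + 1)).getD k 0
      have hlt : k < (T (k + 1)).length := lt_of_lt_of_le (Nat.lt_succ_self k) (hTlen (k + 1))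
      rw [List.getD_eq_getElem _ _ hlt]
      rcases le_total j (k + 1) with h | h
      · exact (hTmono h).getElem hk1
      · exact ((hTmono h).getElem hlt).symm
  refine ⟨⟨binDot α hα, binDot_isPoint α hα⟩, ?_⟩
  have hfpz : P.pEquiv (F.pointMap ⟨binDot α hα, binDot_isPoint α hα⟩) ⟨z, hzpt⟩ := by
    rintro ⟨n, hap⟩
    have h1 : P.refines (z n) ((dec (initSegs α n)).1) := by
      have e1 : z n = (dec (initSegs α ((T n).length))).1 := by
        rw [← hTα n, hdecT n]
      rw [e1]
      exact hdmono α (hTlen n)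
    exact P.not_apart_of_refines h1 (P.apart_symm _ _ hap)
  exact P.pEquiv_trans hfpz hzx
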